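/- In the centipede game with m = 2n decision nodes (n ≥ 1), every mixed-strategy Nash equilibrium (σ, τ) yields expected payoffs Eu₁(σ,τ) = 2 and Eu₂(σ,τ) = 1, the payoffs of the outcome where the game is stopped at the very first node. -/

import Mathlib

open Finset

/-- Player 1's payoff in the reduced normal form of the centipede game with
`m = 2n` decision nodes.  Strategy `a < n` means "stop at own `(a+1)`-th node";
`a = n` means "always continue". -/
noncomputable def u1 (n : ℕ) (a b : Fin (n + 1)) : ℝ :=
  if a ≤ b ∧ (a : ℕ) < n then 2 * ((a : ℕ) + 1)
  else if b < a then 2 * ((b : ℕ) + 1) - 1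
  else 2 * n + 2

/-- Player 2's payoff in the reduced normal form of the centipede game. -/
noncomputable def u2 (n : ℕ) (a b : Fin (n + 1)) : ℝ :=
  if a ≤ b ∧ (a : ℕ) < n then 2 * ((a : ℕ) + 1) - 1
  else if b < a then 2 * ((b : ℕ) + 1) + 2
  else 2 * n + 1

/-- A mixed strategy: a probability vector on `Fin (n+1)`. -/
def IsMixed {n : ℕ} (σ : Fin (n + 1) → ℝ) : Prop :=
  (∀ a, 0 ≤ σ a) ∧ ∑ a, σ a = 1

/-- Expected payoff under mixed strategies `σ` (player 1) and `τ` (player 2). -/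
noncomputable def Eu {n : ℕ} (u : Fin (n + 1) → Fin (n + 1) → ℝ)
    (σ τ : Fin (n + 1) → ℝ) : ℝ :=
  ∑ a, ∑ b, σ a * τ b * u a b

/-- `(σ, τ)` is a (mixed) Nash equilibrium. -/
def IsNash (n : ℕ) (σ τ : Fin (n + 1) → ℝ) : Prop :=
  IsMixed σ ∧ IsMixed τ ∧
    (∀ σ', IsMixed σ' → Eu (u1 n) σ' τ ≤ Eu (u1 n) σ τ) ∧
    (∀ τ', IsMixed τ' → Eu (u2 n) σ τ' ≤ Eu (u2 n) σ τ)

/-- The point mass on the pure strategy `a0`. -/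
noncomputable def delta {n : ℕ} (a0 : Fin (n + 1)) : Fin (n + 1) → ℝ :=
  fun a => if a = a0 then 1 else 0

lemma delta_mixed {n : ℕ} (a0 : Fin (n + 1)) : IsMixed (delta a0) := by
  constructor
  · intro a; unfold delta; split_ifs <;> norm_num
  · simp [delta]

lemma Eu_delta_left {n : ℕ} (u : Fin (n+1) → Fin (n+1) → ℝ) (a0 : Fin (n + 1))
    (τ : Fin (n+1) → ℝ) : Eu u (delta a0) τ = ∑ b, τ b * u a0 b := by
  unfold Eu delta
  rw [Finset.sum_eq_single a0]
  · simp
  · intro a _ ha; simp [ha]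
  · simp

lemma Eu_delta_right {n : ℕ} (u : Fin (n+1) → Fin (n+1) → ℝ) (b0 : Fin (n + 1))
    (σ : Fin (n+1) → ℝ) : Eu u σ (delta b0) = ∑ a, σ a * u a b0 := by
  unfold Eu delta
  congr 1; funext a
  rw [Finset.sum_eq_single b0]
  · simp
  · intro b _ hb; simp [hb]
  · simp

lemma Eu_row {n : ℕ} (u : Fin (n+1) → Fin (n+1) → ℝ) (σ τ : Fin (n+1) → ℝ) :
    Eu u σ τ = ∑ a, σ a * ∑ b, τ b * u a b := by
  unfold Eu; congr 1; funext a; rw [Finset.mul_sum]; congr 1; funext b; ring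

lemma Eu_col {n : ℕ} (u : Fin (n+1) → Fin (n+1) → ℝ) (σ τ : Fin (n+1) → ℝ) :
    Eu u σ τ = ∑ b, τ b * ∑ a, σ a * u a b := by
  unfold Eu; rw [Finset.sum_comm]; congr 1; funext b
  rw [Finset.mul_sum]; congr 1; funext a; ring

lemma support_opt {n : ℕ} (w f : Fin (n+1) → ℝ) (M : ℝ)
    (hw0 : ∀ a, 0 ≤ w a) (hw1 : ∑ a, w a = 1)
    (hfM : ∀ a, f a ≤ M) (hsum : ∑ a, w a * f a = M)
    {a0 : Fin (n+1)} (ha0 : 0 < w a0) : f a0 = M := by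
  have hz : ∑ a, w a * (M - f a) = 0 := by
    have he : ∑ a, w a * (M - f a) = (∑ a, w a) * M - ∑ a, w a * f a := by
      rw [Finset.sum_mul, ← Finset.sum_sub_distrib]; congr 1; funext a; ring
    rw [he, hw1, hsum]; ring
  have hnn : ∀ a ∈ Finset.univ, 0 ≤ w a * (M - f a) := fun a _ =>
    mul_nonneg (hw0 a) (by linarith [hfM a])
  have h0 := (Finset.sum_eq_zero_iff_of_nonneg hnn).mp hz a0 (Finset.mem_univ a0)
  rcases mul_eq_zero.mp h0 with h | h
  · linarith
  · linarith

-- value lemmas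
lemma u1_stop (n : ℕ) (a b : Fin (n+1)) (h1 : (a:ℕ) ≤ (b:ℕ)) (h2 : (a:ℕ) < n) :
    u1 n a b = 2 * ((a:ℕ) + 1) := by
  rw [u1, if_pos ⟨Fin.le_def.mpr h1, h2⟩]

lemma u1_late (n : ℕ) (a b : Fin (n+1)) (h : (b:ℕ) < (a:ℕ)) :
    u1 n a b = 2 * ((b:ℕ) + 1) - 1 := by
  have hn : ¬ (a ≤ b ∧ (a:ℕ) < n) := fun ⟨hle, _⟩ => absurd (Fin.le_def.mp hle) (by omega)
  rw [u1, if_neg hn, if_pos (Fin.lt_def.mpr h)]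

lemma u2_stop (n : ℕ) (a b : Fin (n+1)) (h1 : (a:ℕ) ≤ (b:ℕ)) (h2 : (a:ℕ) < n) :
    u2 n a b = 2 * ((a:ℕ) + 1) - 1 := by
  rw [u2, if_pos ⟨Fin.le_def.mpr h1, h2⟩]

lemma u2_late (n : ℕ) (a b : Fin (n+1)) (h : (b:ℕ) < (a:ℕ)) :
    u2 n a b = 2 * ((b:ℕ) + 1) + 2 := by
  have hn : ¬ (a ≤ b ∧ (a:ℕ) < n) := fun ⟨hle, _⟩ => absurd (Fin.le_def.mp hle) (by omega)
  rw [u2, if_neg hn, if_pos (Fin.lt_def.mpr h)]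

lemma u2_cont (n : ℕ) (a b : Fin (n+1)) (h1 : (a:ℕ) = n) (h2 : (a:ℕ) ≤ (b:ℕ)) :
    u2 n a b = 2 * n + 1 := by
  have hc1 : ¬ (a ≤ b ∧ (a:ℕ) < n) := fun ⟨_, hlt⟩ => by omega
  have hc2 : ¬ b < a := fun hlt => absurd (Fin.lt_def.mp hlt) (by omega)
  rw [u2, if_neg hc1, if_neg hc2]

/-- Every mixed-strategy Nash equilibrium `(σ, τ)` of the
centipede game with `m = 2n` nodes (`n ≥ 1`) yields the payoffs of
stopping at the very first node: `Eu₁(σ,τ) = 2` and `Eu₂(σ,τ) = 1`. -/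
theorem nash_payoffs (n : ℕ) (hn : 1 ≤ n)
    (σ τ : Fin (n + 1) → ℝ) (h : IsNash n σ τ) :
    Eu (u1 n) σ τ = 2 ∧ Eu (u2 n) σ τ = 1 := by
  obtain ⟨⟨hσ0, hσ1⟩, ⟨hτ0, hτ1⟩, h1, h2⟩ := h
  have hFle : ∀ a, (∑ b, τ b * u1 n a b) ≤ Eu (u1 n) σ τ := by
    intro a
    have := h1 _ (delta_mixed a)
    rwa [Eu_delta_left] at this
  have hGle : ∀ b, (∑ a, σ a * u2 n a b) ≤ Eu (u2 n) σ τ := by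
    intro b
    have := h2 _ (delta_mixed b)
    rwa [Eu_delta_right] at this
  have hFsupp : ∀ a, 0 < σ a → (∑ b, τ b * u1 n a b) = Eu (u1 n) σ τ := fun a ha =>
    support_opt σ _ _ hσ0 hσ1 hFle (Eu_row (u1 n) σ τ).symm ha
  have hGsupp : ∀ b, 0 < τ b → (∑ a, σ a * u2 n a b) = Eu (u2 n) σ τ := fun b hb =>
    support_opt τ _ _ hτ0 hτ1 hGle (Eu_col (u2 n) σ τ).symm hb
  have hσex : ∃ a, 0 < σ a := by
    by_contra hc
    push_neg at hc
    have h0 : ∑ a, σ a = 0 := Finset.sum_eq_zero fun a _ => le_antisymm (hc a) (hσ0 a)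
    rw [hσ1] at h0; norm_num at h0
  obtain ⟨A, hAmem, hAmax⟩ := (Finset.univ.filter (fun a => 0 < σ a)).exists_max_image id
    (by obtain ⟨a, ha⟩ := hσex; exact ⟨a, by simp [ha]⟩)
  simp only [Finset.mem_filter, Finset.mem_univ, true_and] at hAmem
  have hAmax' : ∀ a, 0 < σ a → (a:ℕ) ≤ (A:ℕ) := fun a ha =>
    Fin.le_def.mp (hAmax a (by simp [ha]))
  have hA0 : (A : ℕ) = 0 := by
    by_contra hA
    have hA1 : 1 ≤ (A : ℕ) := Nat.one_le_iff_ne_zero.mpr hA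
    have hAn : (A : ℕ) ≤ n := Nat.lt_succ_iff.mp A.isLt
    set A' : Fin (n+1) := ⟨(A : ℕ) - 1, lt_of_le_of_lt (Nat.sub_le _ _) A.isLt⟩ with hA'
    have hA'v : (A' : ℕ) = (A : ℕ) - 1 := rfl
    -- step 1: support of τ is strictly below A
    have step1 : ∀ b, 0 < τ b → (b : ℕ) < (A : ℕ) := by
      intro b hb
      by_contra hble
      push_neg at hble
      have hpt : ∀ a, σ a * u2 n a b ≤ σ a * u2 n a A' := by
        intro a
        rcases lt_or_ge (A : ℕ) (a : ℕ) with hcase | hcase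
        · have hz : σ a = 0 := by
            by_contra hne
            exact absurd (hAmax' a (lt_of_le_of_ne (hσ0 a) (Ne.symm hne))) (by omega)
          simp [hz]
        · apply mul_le_mul_of_nonneg_left _ (hσ0 a)
          rcases eq_or_lt_of_le hcase with heq | hlt
          · -- a = A (vals equal)
            have e1 : u2 n a A' = 2 * ((A':ℕ) + 1) + 2 := u2_late n a A' (by omega)
            have hc2 : ((a:ℕ):ℝ) = ((A:ℕ):ℝ) := by exact_mod_cast heq
            rcases lt_or_ge (a : ℕ) n with han | han
            · rw [e1, u2_stop n a b (by omega) han, hA'v]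
              push_cast [Nat.cast_sub hA1]
              linarith
            · have han' : (a : ℕ) = n := le_antisymm (by omega) han
              rw [e1, u2_cont n a b han' (by omega), hA'v]
              push_cast [Nat.cast_sub hA1]
              have hc : ((A:ℕ) : ℝ) = n := by rw [← hc2]; exact_mod_cast han'
              linarith
          · -- a < A, both values equal 2a+1
            have han : (a : ℕ) < n := by omega
            rw [u2_stop n a A' (by omega) han, u2_stop n a b (by omega) han]
      have hstrict : σ A * u2 n A b < σ A * u2 n A A' := by
        apply mul_lt_mul_of_pos_left _ hAmem
        have e1 : u2 n A A' = 2 * ((A':ℕ) + 1) + 2 := u2_late n A A' (by omega)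
        rcases lt_or_ge (A : ℕ) n with han | han
        · rw [e1, u2_stop n A b hble han, hA'v]
          push_cast [Nat.cast_sub hA1]
          linarith
        · have han' : (A : ℕ) = n := le_antisymm hAn han
          rw [e1, u2_cont n A b han' hble, hA'v]
          push_cast [Nat.cast_sub hA1]
          have hc : ((A:ℕ) : ℝ) = n := by exact_mod_cast han'
          linarith
      have hlt : (∑ a, σ a * u2 n a b) < ∑ a, σ a * u2 n a A' :=
        Finset.sum_lt_sum (fun a _ => hpt a) ⟨A, Finset.mem_univ A, hstrict⟩
      have hb1 := hGsupp b hb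
      have hb2 := hGle A'
      linarith
    -- step 2: B = max of τ's support, derive contradiction with player 1
    have hτex : ∃ b, 0 < τ b := by
      by_contra hc
      push_neg at hc
      have h0 : ∑ b, τ b = 0 := Finset.sum_eq_zero fun b _ => le_antisymm (hc b) (hτ0 b)
      rw [hτ1] at h0; norm_num at h0
    obtain ⟨B, hBmem, hBmax⟩ := (Finset.univ.filter (fun b => 0 < τ b)).exists_max_image id
      (by obtain ⟨b, hb⟩ := hτex; exact ⟨b, by simp [hb]⟩)
    simp only [Finset.mem_filter, Finset.mem_univ, true_and] at hBmem
    have hBmax' : ∀ b, 0 < τ b → (b : ℕ) ≤ (B : ℕ) := fun b hb =>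
      Fin.le_def.mp (hBmax b (by simp [hb]))
    have hBA : (B : ℕ) < (A : ℕ) := step1 B hBmem
    have hBn : (B : ℕ) < n := by omega
    have hpt : ∀ b, τ b * u1 n A b ≤ τ b * u1 n B b := by
      intro b
      rcases lt_or_ge (B : ℕ) (b : ℕ) with hcase | hcase
      · have hz : τ b = 0 := by
          by_contra hne
          exact absurd (hBmax' b (lt_of_le_of_ne (hτ0 b) (Ne.symm hne))) (by omega)
        simp [hz]
      · apply mul_le_mul_of_nonneg_left _ (hτ0 b)
        rcases eq_or_lt_of_le hcase with heq | hlt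
        · have hbB : (b:ℕ) = (B:ℕ) := heq
          rw [u1_late n A b (by omega), u1_stop n B b (by omega) hBn, hbB]
          linarith
        · rw [u1_late n A b (by omega), u1_late n B b hlt]
    have hstrict : τ B * u1 n A B < τ B * u1 n B B := by
      apply mul_lt_mul_of_pos_left _ hBmem
      rw [u1_late n A B hBA, u1_stop n B B le_rfl hBn]
      linarith
    have hlt : (∑ b, τ b * u1 n A b) < ∑ b, τ b * u1 n B b :=
      Finset.sum_lt_sum (fun b _ => hpt b) ⟨B, Finset.mem_univ B, hstrict⟩
    have hA1' := hFsupp A hAmem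
    have hA2' := hFle B
    linarith
  -- now σ is the point mass at 0
  have hσz : ∀ a : Fin (n+1), a ≠ 0 → σ a = 0 := by
    intro a ha
    by_contra hne
    have := hAmax' a (lt_of_le_of_ne (hσ0 a) (Ne.symm hne))
    exact ha (Fin.ext (by simp only [Fin.val_zero]; omega))
  have hσ0eq : σ 0 = 1 := by
    have h0 : ∑ a, σ a = σ 0 := Finset.sum_eq_single 0 (fun a _ ha => hσz a ha) (by simp)
    rw [hσ1] at h0; linarith
  have hrow : ∀ u : Fin (n+1) → Fin (n+1) → ℝ,
      Eu u σ τ = ∑ b, τ b * u 0 b := by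
    intro u
    rw [Eu_row,
      Finset.sum_eq_single 0 (fun a _ ha => by simp [hσz a ha]) (by simp), hσ0eq, one_mul]
  constructor
  · rw [hrow]
    have hv : ∀ b, u1 n 0 b = 2 := by
      intro b
      rw [u1_stop n 0 b (by simp) (by simp; omega)]
      norm_num
    simp only [hv]
    rw [← Finset.sum_mul, hτ1, one_mul]
  · rw [hrow]
    have hv : ∀ b, u2 n 0 b = 1 := by
      intro b
      rw [u2_stop n 0 b (by simp) (by simp; omega)]
      norm_num
    simp only [hv]
    rw [← Finset.sum_mul, hτ1, one_mul]
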